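/- Let p be holomorphic on the open unit disc with Re p(z) ≥ 0 for all z. Then |p(z)| ≤ √2·|p(0)|·(1+|z|)/(1-|z|) for all z in the unit disc. -/

import Mathlib

open Metric Complex

lemma key_abs (a b : ℂ) :
    (‖a - b‖)^2 + 4 * a.re * b.re = (‖a + starRingEnd ℂ b‖)^2 := by
  simp [Complex.sq_norm, Complex.normSq_apply]
  ring

lemma main_eps (p : ℂ → ℂ)
    (hp : DifferentiableOn ℂ p (Metric.ball (0 : ℂ) 1))
    (hre : ∀ z ∈ Metric.ball (0 : ℂ) 1, 0 ≤ (p z).re)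
    {ε : ℝ} (hε : 0 < ε) {z : ℂ} (hz : z ∈ Metric.ball (0 : ℂ) 1) :
    ‖p z + ε‖ ≤
      ‖p 0 + ε‖ * (1 + ‖z‖) / (1 - ‖z‖) := by
  set b : ℂ := p 0 + ε with hb
  have h0 : (0 : ℂ) ∈ Metric.ball (0 : ℂ) 1 := by simp
  have hreq : ∀ w ∈ Metric.ball (0 : ℂ) 1, ε ≤ (p w + ε).re := by
    intro w hw
    have := hre w hw
    simp [Complex.add_re]
    linarith
  have hbre : ε ≤ b.re := hreq 0 h0
  have hd : ∀ w ∈ Metric.ball (0 : ℂ) 1, p w + ε + starRingEnd ℂ b ≠ 0 := by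
    intro w hw h
    have h1 : (p w + ε + starRingEnd ℂ b).re = 0 := by rw [h]; simp
    have h2 := hreq w hw
    simp [Complex.add_re, Complex.conj_re] at h1
    have : (p w).re + ε = (p w + ε).re := by simp [Complex.add_re]
    linarith [hre w hw]
  set φ : ℂ → ℂ := fun w => (p w + ε - b) / (p w + ε + starRingEnd ℂ b) with hφ
  have hφd : DifferentiableOn ℂ φ (Metric.ball (0 : ℂ) 1) := by
    apply DifferentiableOn.div
    · exact (hp.add_const _).sub_const _
    · exact (hp.add_const _).add_const _
    · exact hd
  have hφ0 : φ 0 = 0 := by simp [hφ, ← hb]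
  have hmaps : Set.MapsTo φ (Metric.ball (0 : ℂ) 1) (Metric.ball (0 : ℂ) 1) := by
    intro w hw
    rw [mem_ball_zero_iff]
    have hda := hd w hw
    rw [hφ]
    rw [norm_div, div_lt_one (norm_pos_iff.mpr hda)]
    have hk := key_abs (p w + ε) b
    have h1 : ε ≤ (p w + ε).re := hreq w hw
    have : (‖p w + ε - b‖)^2 < (‖p w + ε + starRingEnd ℂ b‖)^2 := by
      nlinarith
    exact lt_of_pow_lt_pow_left₀ 2 (norm_nonneg _) this
  have hschwarz : ‖φ z‖ ≤ ‖z‖ :=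
    Complex.norm_le_norm_of_mapsTo_ball hφd (hmaps.mono_right ball_subset_closedBall) hφ0 (mem_ball_zero_iff.mp hz)
  have hz1 : ‖z‖ < 1 := mem_ball_zero_iff.mp hz
  have hφz1 : ‖φ z‖ < 1 := lt_of_le_of_lt hschwarz hz1
  have hdz := hd z hz
  have hsolve : (p z + ε) * (1 - φ z) = b + starRingEnd ℂ b * φ z := by
    rw [hφ]
    field_simp
    ring
  have hone : (1 : ℝ) - ‖z‖ ≤ ‖1 - φ z‖ := by
    have h := norm_sub_norm_le (1 : ℂ) (φ z)
    simp only [norm_one] at h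
    linarith
  have habs : ‖p z + ε‖ * ‖1 - φ z‖
      ≤ ‖b‖ * (1 + ‖z‖) := by
    rw [← norm_mul, hsolve]
    calc ‖b + starRingEnd ℂ b * φ z‖
        ≤ ‖b‖ + ‖starRingEnd ℂ b * φ z‖ := norm_add_le _ _
      _ = ‖b‖ + ‖b‖ * ‖φ z‖ := by
          rw [norm_mul, Complex.norm_conj]
      _ ≤ ‖b‖ + ‖b‖ * ‖z‖ := by
          have : ‖b‖ * ‖φ z‖ ≤ ‖b‖ * ‖z‖ :=
            mul_le_mul_of_nonneg_left hschwarz (norm_nonneg _)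
          linarith
      _ = ‖b‖ * (1 + ‖z‖) := by ring
  rw [le_div_iff₀ (by linarith : (0:ℝ) < 1 - ‖z‖)]
  nlinarith [norm_nonneg (p z + ε), norm_nonneg (1 - φ z)]

theorem stmt_4 (p : ℂ → ℂ)
    (hp : DifferentiableOn ℂ p (Metric.ball (0 : ℂ) 1))
    (hre : ∀ z ∈ Metric.ball (0 : ℂ) 1, 0 ≤ (p z).re) :
    ∀ z ∈ Metric.ball (0 : ℂ) 1,
      ‖p z‖ ≤
        Real.sqrt 2 * ‖p 0‖ * (1 + ‖z‖) / (1 - ‖z‖) := by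
  intro z hz
  have hz1 : ‖z‖ < 1 := mem_ball_zero_iff.mp hz
  have hden : (0:ℝ) < 1 - ‖z‖ := by linarith
  have hmain : ‖p z‖ ≤
      ‖p 0‖ * (1 + ‖z‖) / (1 - ‖z‖) := by
    have key : ∀ ε : ℝ, 0 < ε → ‖p z‖ ≤
        ε + (‖p 0‖ + ε) * (1 + ‖z‖) / (1 - ‖z‖) := by
      intro ε hε
      have h1 := main_eps p hp hre hε hz
      have h2 : ‖p z‖ - ε ≤ ‖p z + ε‖ := by
        have h := norm_add_le (p z + ε) (-(ε : ℂ))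
        rw [add_neg_cancel_right, norm_neg, Complex.norm_real, Real.norm_eq_abs, abs_of_pos hε] at h
        linarith
      have h3 : ‖p 0 + ε‖ ≤ ‖p 0‖ + ε := by
        have := norm_add_le (p 0) (ε : ℂ)
        rw [Complex.norm_real, Real.norm_eq_abs, abs_of_pos hε] at this
        exact this
      have h4 : (‖p 0 + ε‖) * (1 + ‖z‖) / (1 - ‖z‖)
          ≤ (‖p 0‖ + ε) * (1 + ‖z‖) / (1 - ‖z‖) := by
        gcongr
      linarith
    -- take limit ε → 0⁺
    have hlim : Filter.Tendsto (fun ε : ℝ => ε + (‖p 0‖ + ε) * (1 + ‖z‖) / (1 - ‖z‖))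
        (nhdsWithin 0 (Set.Ioi 0)) (nhds (0 + (‖p 0‖ + 0) * (1 + ‖z‖) / (1 - ‖z‖))) := by
      apply Filter.Tendsto.mono_left _ nhdsWithin_le_nhds
      exact ((continuous_id.add ((continuous_const.add continuous_id).mul continuous_const |>.div_const _)).tendsto 0)
    rw [zero_add, add_zero] at hlim
    exact ge_of_tendsto hlim (Filter.eventually_of_mem self_mem_nhdsWithin fun ε hε => key ε hε)
  calc ‖p z‖ ≤ ‖p 0‖ * (1 + ‖z‖) / (1 - ‖z‖) := hmain
    _ ≤ Real.sqrt 2 * ‖p 0‖ * (1 + ‖z‖) / (1 - ‖z‖) := by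
        gcongr
        nlinarith [norm_nonneg (p 0), Real.sq_sqrt (by norm_num : (2:ℝ) ≥ 0), Real.sqrt_nonneg 2, Real.one_le_sqrt.mpr (by norm_num : (1:ℝ) ≤ 2)]
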